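/- Let g(t) = θ₁(1 + η₂ t + (η₃/2) t²)e^{-t} with θ₁ > 0, η₂, η₃ ≥ 0. Then g is non-increasing on [0, ∞) if and only if 0 ≤ η₂ ≤ 1 and (η₂ ≥ η₃ or η₂² + (η₃ − 1)² ≤ 1). -/

import Mathlib

lemma hasDerivAt_kernel (θ1 η2 η3 t : ℝ) :
    HasDerivAt (fun t => θ1 * (1 + η2 * t + η3 / 2 * t ^ 2) * Real.exp (-t))
      (-(θ1 / 2) * Real.exp (-t) * (2 * (1 - η2) + 2 * (η2 - η3) * t + η3 * t ^ 2)) t := by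
  have he : HasDerivAt (fun t : ℝ => Real.exp (-t)) (-Real.exp (-t)) t := by
    have h := (Real.hasDerivAt_exp (-t)).comp t (hasDerivAt_neg t)
    simp at h
    exact h
  have hp : HasDerivAt (fun t : ℝ => θ1 * (1 + η2 * t + η3 / 2 * t ^ 2))
      (θ1 * (η2 + η3 * t)) t := by
    have h0 : HasDerivAt (fun t : ℝ => 1 + η2 * t + η3 / 2 * t ^ 2) (η2 + η3 * t) t := by
      have h1 := ((hasDerivAt_id t).const_mul η2).const_add 1
      have h2 := (hasDerivAt_pow 2 t).const_mul (η3 / 2)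
      exact (h1.add h2).congr_deriv (by ring)
    simpa [mul_comm] using h0.const_mul θ1
  have := hp.mul he
  exact this.congr_deriv (by ring)

lemma antitoneOn_deriv_nonpos {g : ℝ → ℝ} {t d : ℝ}
    (hA : AntitoneOn g (Set.Ici 0)) (ht : 0 ≤ t) (hd : HasDerivAt g d t) : d ≤ 0 := by
  have hs : Filter.Tendsto (slope g t) (nhdsWithin t {t}ᶜ) (nhds d) :=
    hasDerivAt_iff_tendsto_slope.mp hd
  have hs' : Filter.Tendsto (slope g t) (nhdsWithin t (Set.Ioi t)) (nhds d) :=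
    hs.mono_left (nhdsWithin_mono t fun y hy => ne_of_gt hy)
  refine le_of_tendsto hs' ?_
  filter_upwards [self_mem_nhdsWithin] with y hy
  have hty : t < y := hy
  have hgy : g y ≤ g t := hA ht (le_trans ht hty.le) hty.le
  rw [slope_def_field]
  exact div_nonpos_of_nonpos_of_nonneg (by linarith) (by linarith)

/-- `g(t) = θ₁(1 + η₂t + (η₃/2)t²)e^(-t)` is non-increasing on `[0,∞)` iff
`0 ≤ η₂ ≤ 1` and (`η₂ ≥ η₃` or `η₂² + (η₃−1)² ≤ 1`). -/
theorem kernel_monotonicity_iff (θ1 η2 η3 : ℝ) (h1 : 0 < θ1) (h2 : 0 ≤ η2)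
    (h3 : 0 ≤ η3) (g : ℝ → ℝ)
    (hg : ∀ t, g t = θ1 * (1 + η2 * t + η3 / 2 * t ^ 2) * Real.exp (-t)) :
    AntitoneOn g (Set.Ici 0)
      ↔ (0 ≤ η2 ∧ η2 ≤ 1 ∧ (η3 ≤ η2 ∨ η2 ^ 2 + (η3 - 1) ^ 2 ≤ 1)) := by
  have hgeq : g = fun t => θ1 * (1 + η2 * t + η3 / 2 * t ^ 2) * Real.exp (-t) :=
    funext hg
  constructor
  · intro hA
    have key : ∀ t, 0 ≤ t → 0 ≤ 2 * (1 - η2) + 2 * (η2 - η3) * t + η3 * t ^ 2 := by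
      intro t ht
      have hd : HasDerivAt g
          (-(θ1 / 2) * Real.exp (-t) * (2 * (1 - η2) + 2 * (η2 - η3) * t + η3 * t ^ 2)) t := by
        rw [hgeq]; exact hasDerivAt_kernel θ1 η2 η3 t
      have hle := antitoneOn_deriv_nonpos hA ht hd
      have hpos : 0 < θ1 / 2 * Real.exp (-t) := by positivity
      by_contra hneg
      push_neg at hneg
      nlinarith [mul_pos hpos (neg_pos.mpr hneg)]
    have hη2 : η2 ≤ 1 := by have := key 0 le_rfl; nlinarith
    refine ⟨h2, hη2, ?_⟩
    by_cases hle : η3 ≤ η2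
    · exact Or.inl hle
    · right
      push_neg at hle
      have hη3 : 0 < η3 := lt_of_le_of_lt h2 hle
      have h := key ((η3 - η2) / η3) (div_nonneg (by linarith) hη3.le)
      have hne : η3 ≠ 0 := ne_of_gt hη3
      field_simp at h
      rw [zero_mul] at h
      nlinarith [mul_pos hη3 hη3]
  · rintro ⟨-, hb, hc⟩
    have hp : ∀ x, 0 ≤ x → 0 ≤ 2 * (1 - η2) + 2 * (η2 - η3) * x + η3 * x ^ 2 := by
      intro x hx
      rcases hc with hle | hcirc
      · nlinarith [mul_nonneg h3 (sq_nonneg x), mul_nonneg (sub_nonneg.mpr hle) hx]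
      · rcases eq_or_lt_of_le h3 with h0 | hpos
        · have hη2 : η2 = 0 := by nlinarith
          rw [hη2, ← h0]; nlinarith
        · nlinarith [sq_nonneg (η3 * x + η2 - η3), mul_pos hpos hpos]
    rw [hgeq]
    apply antitoneOn_of_deriv_nonpos (convex_Ici 0)
    · fun_prop
    · intro x _
      exact (hasDerivAt_kernel θ1 η2 η3 x).differentiableAt.differentiableWithinAt
    · intro x hx
      rw [(hasDerivAt_kernel θ1 η2 η3 x).deriv]
      have hx' : 0 ≤ x := le_of_lt (by simpa using hx)
      have hpx := hp x hx'
      have hpos : 0 < θ1 / 2 * Real.exp (-x) := by positivity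
      nlinarith [mul_nonneg hpos.le hpx]
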